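/- The sequence V_n = 1/((s_n - 1)^{n-2} x_n^{n-1} a_n a_{n+1}), where a_{n+1} ~ s_n^2/4, a_n ~ s_n^3/4 and x_n ~ s_n^3/4, satisfies V_n · s_n^{4n} / 2^{2n+2} → 1 as n → ∞; that is, V_n is asymptotic to 2^{2n+2}/s_n^{4n}. -/

import Mathlib

def sylvester : ℕ → ℕ
  | 0 => 2
  | n + 1 => sylvester n * (sylvester n - 1) + 1

noncomputable def sylA : ℕ → ℝ := fun n =>
  if Even n then ((sylvester n : ℝ) ^ 2 - (sylvester n : ℝ) + 2) / 4
  else ((sylvester n : ℝ) ^ 2 - 3 * (sylvester n : ℝ) + 4) / 4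

noncomputable def sylAN : ℕ → ℝ := fun n =>
  ((sylvester n : ℝ) - 2) * sylA n + ((sylvester n : ℝ) - 1)

noncomputable def sylX : ℕ → ℝ := fun n => 1 + sylAN n + sylA n

noncomputable def sylVol : ℕ → ℝ := fun n =>
  1 / (((sylvester n : ℝ) - 1) ^ (n - 2) * sylX n ^ (n - 1) * sylAN n * sylA n)

lemma sylvester_ge_two (n : ℕ) : 2 ≤ sylvester n := by
  induction n with
  | zero => simp [sylvester]
  | succ k ih =>
    have h1 : 1 ≤ sylvester k - 1 := by omega
    have := Nat.mul_le_mul ih h1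
    simp [sylvester]; omega

lemma two_pow_le_sylvester (n : ℕ) : 2 ^ n ≤ sylvester n := by
  induction n with
  | zero => simp [sylvester]
  | succ k ih =>
    match k, ih with
    | 0, _ => simp [sylvester]
    | j + 1, ih =>
      have h2 : 2 ≤ sylvester j := sylvester_ge_two j
      have h3 : 3 ≤ sylvester (j + 1) := by
        have h1 : 1 ≤ sylvester j - 1 := by omega
        have := Nat.mul_le_mul h2 h1
        simp [sylvester]; omega
      set s := sylvester (j + 1) with hs
      have hm : 2 * s ≤ s * (s - 1) := by
        calc 2 * s = s * 2 := by ring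
        _ ≤ s * (s - 1) := Nat.mul_le_mul_left s (by omega)
      calc 2 ^ (j + 2) = 2 * 2 ^ (j + 1) := by ring
      _ ≤ 2 * s := by omega
      _ ≤ s * (s - 1) := hm
      _ ≤ s * (s - 1) + 1 := Nat.le_succ _
      _ = sylvester (j + 2) := rfl

lemma sylA_bounds (n : ℕ) (h2 : (2:ℝ) ≤ (sylvester n : ℝ)) :
    (sylvester n : ℝ) ^ 2 - 3 * (sylvester n : ℝ) ≤ 4 * sylA n ∧
      4 * sylA n ≤ (sylvester n : ℝ) ^ 2 := by
  unfold sylA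
  split_ifs with h <;> constructor <;> nlinarith

lemma syl_facts (n : ℕ) (h8 : (8:ℝ) ≤ (sylvester n : ℝ)) :
    ((sylvester n:ℝ)^2 * ((sylvester n:ℝ) - 5) ≤ 4 * sylAN n ∧ 4 * sylAN n ≤ (sylvester n:ℝ)^3) ∧
    ((sylvester n:ℝ)^2 * ((sylvester n:ℝ) - 4) ≤ 4 * sylX n ∧ 4 * sylX n ≤ (sylvester n:ℝ)^3) ∧
    ((sylvester n:ℝ) * ((sylvester n:ℝ) - 3) ≤ 4 * sylA n ∧ 4 * sylA n ≤ (sylvester n:ℝ)^2) ∧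
    (0 < sylA n ∧ 0 < sylAN n ∧ 0 < sylX n) := by
  set s : ℝ := (sylvester n : ℝ) with hs
  obtain ⟨hA1, hA2⟩ := sylA_bounds n (by linarith)
  have hAN : 4 * sylAN n = (s - 2) * (4 * sylA n) + 4 * (s - 1) := by
    simp only [sylAN, ← hs]; ring
  have hX : 4 * sylX n = (s - 1) * (4 * sylA n) + 4 * s := by
    simp only [sylX, sylAN, ← hs]; ring
  have hm1 : (s - 2) * (s^2 - 3*s) ≤ (s - 2) * (4 * sylA n) :=
    mul_le_mul_of_nonneg_left hA1 (by linarith)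
  have hm2 : (s - 2) * (4 * sylA n) ≤ (s - 2) * s^2 :=
    mul_le_mul_of_nonneg_left hA2 (by linarith)
  have hm3 : (s - 1) * (s^2 - 3*s) ≤ (s - 1) * (4 * sylA n) :=
    mul_le_mul_of_nonneg_left hA1 (by linarith)
  have hm4 : (s - 1) * (4 * sylA n) ≤ (s - 1) * s^2 :=
    mul_le_mul_of_nonneg_left hA2 (by linarith)
  refine ⟨⟨by nlinarith, by nlinarith⟩, ⟨by nlinarith, by nlinarith⟩,
    ⟨by nlinarith, hA2⟩, by nlinarith, by nlinarith, by nlinarith⟩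

lemma syl_real_ge (m : ℕ) : (8:ℝ) ≤ (sylvester (m+3) : ℝ) ∧
    (2:ℝ)^(m+3) ≤ (sylvester (m+3) : ℝ) := by
  have h1 : (2:ℝ)^(m+3) ≤ (sylvester (m+3) : ℝ) := by
    exact_mod_cast two_pow_le_sylvester (m+3)
  have h2 : (8:ℝ) = 2^3 := by norm_num
  have h3 : (2:ℝ)^3 ≤ 2^(m+3) := pow_le_pow_right₀ (by norm_num) (by omega)
  exact ⟨by linarith, h1⟩

lemma f_eq (m : ℕ) : sylVol (m+3) * (sylvester (m+3):ℝ)^(4*(m+3)) / 2^(2*(m+3)+2)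
    = (sylvester (m+3):ℝ)^(4*m+12) /
      (((sylvester (m+3):ℝ) - 1)^(m+1) * sylX (m+3)^(m+2) * sylAN (m+3) * sylA (m+3)
        * 2^(2*m+8)) := by
  simp only [sylVol]
  rw [show m+3-2 = m+1 by omega, show m+3-1 = m+2 by omega,
    show 4*(m+3) = 4*m+12 by ring, show 2*(m+3)+2 = 2*m+8 by ring]
  rw [div_mul_eq_mul_div, one_mul, div_div]

lemma pow_two_split (m : ℕ) : (2:ℝ)^(2*m+8) = 4^(m+2) * 16 := by
  rw [show 2*m+8 = 2*(m+2)+4 by ring, pow_add, pow_mul]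
  norm_num

lemma f_lower (m : ℕ) :
    1 ≤ sylVol (m+3) * (sylvester (m+3) : ℝ) ^ (4*(m+3)) / 2 ^ (2*(m+3)+2) := by
  obtain ⟨h8, hp⟩ := syl_real_ge m
  obtain ⟨⟨hAN1, hAN2⟩, ⟨hX1, hX2⟩, ⟨hA1, hA2⟩, hApos, hANpos, hXpos⟩ := syl_facts (m+3) h8
  set s : ℝ := (sylvester (m+3) : ℝ) with hs
  rw [f_eq m]
  have hD : (0:ℝ) < (s - 1)^(m+1) * sylX (m+3)^(m+2) * sylAN (m+3) * sylA (m+3)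
      * 2^(2*m+8) := by
    have h1 : (0:ℝ) < s - 1 := by linarith
    positivity
  rw [le_div_iff₀ hD, one_mul]
  calc (s - 1)^(m+1) * sylX (m+3)^(m+2) * sylAN (m+3) * sylA (m+3) * 2^(2*m+8)
      = (s - 1)^(m+1) * (4 * sylX (m+3))^(m+2) * (4 * sylAN (m+3)) * (4 * sylA (m+3)) := by
        rw [pow_two_split, mul_pow]; ring
    _ ≤ s^(m+1) * (s^3)^(m+2) * s^3 * s^2 := by
        have h1 : (0:ℝ) ≤ s - 1 := by linarith
        have h2 : s - 1 ≤ s := by linarith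
        have h3 : (0:ℝ) ≤ 4 * sylX (m+3) := by linarith
        gcongr
    _ = s^(4*m+12) := by ring

lemma f_upper (m : ℕ) :
    sylVol (m+3) * (sylvester (m+3) : ℝ) ^ (4*(m+3)) / 2 ^ (2*(m+3)+2)
      ≤ Real.exp (32 * ((m+3 : ℕ) : ℝ) / 2^(m+3)) /
        ((1 - 5 / 2^(m+3)) * (1 - 3 / 2^(m+3))) := by
  obtain ⟨h8, hp⟩ := syl_real_ge m
  obtain ⟨⟨hAN1, hAN2⟩, ⟨hX1, hX2⟩, ⟨hA1, hA2⟩, hApos, hANpos, hXpos⟩ := syl_facts (m+3) h8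
  set s : ℝ := (sylvester (m+3) : ℝ) with hs
  set p : ℝ := (2:ℝ)^(m+3) with hpdef
  have hp8 : (8:ℝ) ≤ p := by
    have : (2:ℝ)^3 ≤ 2^(m+3) := pow_le_pow_right₀ (by norm_num) (by omega)
    simpa [hpdef] using by norm_num at this ⊢; linarith
  have hppos : (0:ℝ) < p := by linarith
  have hspos : (0:ℝ) < s := by linarith
  have hQ5 : (0:ℝ) < 1 - 5 / p := by
    have : 5 / p ≤ 5 / 8 := by gcongr
    linarith
  have hQ3 : (0:ℝ) < 1 - 3 / p := by
    have : 3 / p ≤ 3 / 8 := by gcongr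
    linarith
  have hs4 : (0:ℝ) < s - 4 := by linarith
  -- e2
  have c5 : (1 - 5 / p) * s ≤ s - 5 := by
    have h1 : (1:ℝ) ≤ s / p := (one_le_div hppos).mpr hp
    have h2 : (1 - 5 / p) * s = s - 5 * (s / p) := by ring
    nlinarith
  have c3 : (1 - 3 / p) * s ≤ s - 3 := by
    have h1 : (1:ℝ) ≤ s / p := (one_le_div hppos).mpr hp
    have h2 : (1 - 3 / p) * s = s - 3 * (s / p) := by ring
    nlinarith
  have e2 : ((1 - 5 / p) * (1 - 3 / p)) * s^2 ≤ (s - 5) * (s - 3) := by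
    calc ((1 - 5 / p) * (1 - 3 / p)) * s^2 = ((1 - 5 / p) * s) * ((1 - 3 / p) * s) := by ring
      _ ≤ (s - 5) * (s - 3) := by
          apply mul_le_mul c5 c3 (by positivity) (by linarith)
  -- e1
  have hse : s ≤ Real.exp (4 / (s - 4)) * (s - 4) := by
    have hb := Real.add_one_le_exp (4 / (s - 4))
    have h2 : (4 / (s - 4) + 1) * (s - 4) = s := by field_simp; ring
    nlinarith [mul_le_mul_of_nonneg_right hb hs4.le]
  have e1 : s^(2*m+3) ≤ Real.exp (32 * ((m+3 : ℕ) : ℝ) / p) * (s - 4)^(2*m+3) := by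
    have h2 : s^(2*m+3) ≤ (Real.exp (4 / (s - 4)) * (s - 4))^(2*m+3) :=
      pow_le_pow_left₀ hspos.le hse _
    rw [mul_pow, ← Real.exp_nat_mul] at h2
    have h4 : ((2*m+3 : ℕ) : ℝ) * (4 / (s - 4)) ≤ 32 * ((m+3 : ℕ) : ℝ) / p := by
      have hps4 : p / 2 ≤ s - 4 := by linarith
      have hd : 4 / (s - 4) ≤ 4 / (p / 2) := by
        apply div_le_div_of_nonneg_left (by norm_num) (by linarith) hps4
      have hd2 : (4:ℝ) / (p / 2) = 8 / p := by
        rw [div_div_eq_mul_div]; norm_num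
      push_cast
      have hnn : (0:ℝ) ≤ 2 * (m:ℝ) + 3 := by positivity
      calc (2 * (m:ℝ) + 3) * (4 / (s - 4)) ≤ (2 * (m:ℝ) + 3) * (8 / p) := by
            apply mul_le_mul_of_nonneg_left _ hnn
            rw [← hd2]; exact hd
        _ = (16 * (m:ℝ) + 24) / p := by ring
        _ ≤ 32 * ((m:ℝ) + 3) / p := by
            gcongr
            linarith
    calc s^(2*m+3) ≤ Real.exp (((2*m+3 : ℕ) : ℝ) * (4 / (s - 4))) * (s - 4)^(2*m+3) := h2
      _ ≤ Real.exp (32 * ((m+3 : ℕ) : ℝ) / p) * (s - 4)^(2*m+3) := by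
          apply mul_le_mul_of_nonneg_right (Real.exp_le_exp.mpr h4) (by positivity)
  -- combine
  rw [f_eq m]
  have hD : (0:ℝ) < (s - 1)^(m+1) * sylX (m+3)^(m+2) * sylAN (m+3) * sylA (m+3)
      * 2^(2*m+8) := by
    have h1 : (0:ℝ) < s - 1 := by linarith
    positivity
  rw [div_le_div_iff₀ hD (by positivity)]
  have hDlow : (s - 4)^(m+1) * (s^2 * (s - 4))^(m+2) * (s^2 * (s - 5)) * (s * (s - 3))
      ≤ (s - 1)^(m+1) * (4 * sylX (m+3))^(m+2) * (4 * sylAN (m+3)) * (4 * sylA (m+3)) := by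
    have h1 : s - 4 ≤ s - 1 := by linarith
    have h2 : (0:ℝ) ≤ s - 4 := hs4.le
    have h3 : (0:ℝ) ≤ s^2 * (s - 4) := mul_nonneg (sq_nonneg s) h2
    have h4 : (0:ℝ) ≤ s^2 * (s - 5) := mul_nonneg (sq_nonneg s) (by linarith)
    have h5 : (0:ℝ) ≤ s * (s - 3) := mul_nonneg hspos.le (by linarith)
    have t1 : (s - 4)^(m+1) ≤ (s - 1)^(m+1) := pow_le_pow_left₀ h2 h1 _
    have t2 : (s^2 * (s - 4))^(m+2) ≤ (4 * sylX (m+3))^(m+2) := pow_le_pow_left₀ h3 hX1 _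
    have nnB1 : (0:ℝ) ≤ (s - 1)^(m+1) := pow_nonneg (by linarith) _
    have nnB2 : (0:ℝ) ≤ (4 * sylX (m+3))^(m+2) := pow_nonneg (by linarith) _
    have nnB12 : (0:ℝ) ≤ (s - 1)^(m+1) * (4 * sylX (m+3))^(m+2) := mul_nonneg nnB1 nnB2
    have nnB123 : (0:ℝ) ≤ (s - 1)^(m+1) * (4 * sylX (m+3))^(m+2) * (4 * sylAN (m+3)) :=
      mul_nonneg nnB12 (by linarith)
    exact mul_le_mul (mul_le_mul (mul_le_mul t1 t2 (pow_nonneg h3 _) nnB1) hAN1 h4 nnB12)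
      hA1 h5 nnB123
  have key2 : ((1 - 5 / p) * (1 - 3 / p)) * s^(2*m+5)
      ≤ Real.exp (32 * ((m+3 : ℕ) : ℝ) / p) * ((s - 4)^(2*m+3) * ((s - 5) * (s - 3))) := by
    calc ((1 - 5 / p) * (1 - 3 / p)) * s^(2*m+5)
        = s^(2*m+3) * (((1 - 5 / p) * (1 - 3 / p)) * s^2) := by ring
      _ ≤ (Real.exp (32 * ((m+3 : ℕ) : ℝ) / p) * (s - 4)^(2*m+3)) * ((s - 5) * (s - 3)) := by
          apply mul_le_mul e1 e2 (by positivity) (by positivity)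
      _ = Real.exp (32 * ((m+3 : ℕ) : ℝ) / p) * ((s - 4)^(2*m+3) * ((s - 5) * (s - 3))) := by
          ring
  calc s^(4*m+12) * ((1 - 5 / p) * (1 - 3 / p))
      = (((1 - 5 / p) * (1 - 3 / p)) * s^(2*m+5)) * s^(2*m+7) := by ring
    _ ≤ (Real.exp (32 * ((m+3 : ℕ) : ℝ) / p) * ((s - 4)^(2*m+3) * ((s - 5) * (s - 3))))
          * s^(2*m+7) := by
        apply mul_le_mul_of_nonneg_right key2 (by positivity)
    _ = Real.exp (32 * ((m+3 : ℕ) : ℝ) / p) *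
          ((s - 4)^(m+1) * (s^2 * (s - 4))^(m+2) * (s^2 * (s - 5)) * (s * (s - 3))) := by
        rw [mul_pow]; ring
    _ ≤ Real.exp (32 * ((m+3 : ℕ) : ℝ) / p) *
          ((s - 1)^(m+1) * (4 * sylX (m+3))^(m+2) * (4 * sylAN (m+3)) * (4 * sylA (m+3))) := by
        apply mul_le_mul_of_nonneg_left hDlow (Real.exp_nonneg _)
    _ = Real.exp (32 * ((m+3 : ℕ) : ℝ) / p) *
          ((s - 1)^(m+1) * sylX (m+3)^(m+2) * sylAN (m+3) * sylA (m+3) * 2^(2*m+8)) := by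
        rw [pow_two_split, mul_pow]; ring

theorem volume_asymptotics :
    Filter.Tendsto
      (fun n => sylVol n * (sylvester n : ℝ) ^ (4 * n) / 2 ^ (2 * n + 2))
      Filter.atTop (nhds 1) := by
  set f : ℕ → ℝ := fun n => sylVol n * (sylvester n : ℝ) ^ (4 * n) / 2 ^ (2 * n + 2) with hf
  -- the upper squeeze function
  set U : ℕ → ℝ := fun n =>
    Real.exp (32 * n / 2 ^ n) / ((1 - 5 / 2 ^ n) * (1 - 3 / 2 ^ n)) with hU
  have hUlim : Filter.Tendsto U Filter.atTop (nhds 1) := by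
    have h0 : Filter.Tendsto (fun n : ℕ => 32 * (n : ℝ) / 2 ^ n) Filter.atTop (nhds 0) := by
      have := tendsto_pow_const_mul_const_pow_of_lt_one 1 (by norm_num : (0:ℝ) ≤ 1/2)
        (by norm_num : (1:ℝ)/2 < 1)
      have h := (this.const_mul (32 : ℝ))
      simp only [mul_zero] at h
      convert h using 2 with n
      rw [pow_one]
      rw [div_pow, one_pow]
      ring
    have hexp : Filter.Tendsto (fun n : ℕ => Real.exp (32 * n / 2 ^ n))
        Filter.atTop (nhds 1) := by
      have := (Real.continuous_exp.tendsto 0).comp h0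
      simp only [Real.exp_zero] at this; exact this
    have hgeo : Filter.Tendsto (fun n : ℕ => ((1:ℝ)/2) ^ n) Filter.atTop (nhds 0) :=
      tendsto_pow_atTop_nhds_zero_of_lt_one (by norm_num) (by norm_num)
    have h5 : Filter.Tendsto (fun n : ℕ => (1:ℝ) - 5 / 2 ^ n) Filter.atTop (nhds 1) := by
      have := (hgeo.const_mul (5:ℝ)).const_sub (1:ℝ)
      simp only [mul_zero, sub_zero] at this
      convert this using 2 with n
      rw [div_pow, one_pow]
      ring
    have h3 : Filter.Tendsto (fun n : ℕ => (1:ℝ) - 3 / 2 ^ n) Filter.atTop (nhds 1) := by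
      have := (hgeo.const_mul (3:ℝ)).const_sub (1:ℝ)
      simp only [mul_zero, sub_zero] at this
      convert this using 2 with n
      rw [div_pow, one_pow]
      ring
    have := hexp.div (h5.mul h3) (by norm_num)
    simp only [mul_one, div_one] at this; exact this
  -- squeeze
  apply tendsto_of_tendsto_of_tendsto_of_le_of_le' tendsto_const_nhds hUlim
  · -- eventually 1 ≤ f n
    filter_upwards [Filter.eventually_ge_atTop 3] with n hn
    obtain ⟨m, rfl⟩ : ∃ m, n = m + 3 := ⟨n - 3, by omega⟩
    exact f_lower m
  · filter_upwards [Filter.eventually_ge_atTop 3] with n hn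
    obtain ⟨m, rfl⟩ : ∃ m, n = m + 3 := ⟨n - 3, by omega⟩
    exact f_upper m
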